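/- Let SP be a specification over Σ and σ : Σ → Σ' an injective signature morphism (injective on function symbols, with injective variable map). Let τ be the translation induced by σ, namely τ(t ≈ t') = { σ(t) ≈ σ(t') }. Then τ interprets SP; in fact τ interprets SP in the class K = { A' : A' a Σ'-algebra with A'↾σ ∈ ⟦SP⟧ }. -/

import Mathlib

open FirstOrder

/-- A single-sorted algebraic signature, i.e. a first-order language
(used with no relation symbols). -/
abbrev Signature : Type 1 := FirstOrder.Language.{0,0}

/-- An equation over a signature `L`: a pair of terms with variables in `ℕ`. -/
abbrev Eqn (L : Signature) : Type := L.Term ℕ × L.Term ℕ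

/-- A conditional equation: a finite set of premise equations and a conclusion equation. -/
abbrev CondEqn (L : Signature) : Type := Finset (Eqn L) × Eqn L

/-- An algebra for the signature `L`: a structure with nonempty carrier
(in a fixed universe). -/
structure Alg (L : Signature) : Type 1 where
  carrier : Type
  [str : L.Structure carrier]
  [nonempty : Nonempty carrier]

attribute [instance] Alg.str Alg.nonempty

/-- An assignment satisfies an equation. -/
def Alg.SatEq {L : Signature} (A : Alg L) (h : ℕ → A.carrier) (e : Eqn L) : Prop :=
  e.1.realize h = e.2.realize h

/-- An algebra satisfies a conditional equation. -/
def Alg.Sat {L : Signature} (A : Alg L) (ξ : CondEqn L) : Prop :=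
  ∀ h : ℕ → A.carrier, (∀ e ∈ ξ.1, A.SatEq h e) → A.SatEq h ξ.2

/-- A class of algebras satisfies a conditional equation. -/
def ClassSat {L : Signature} (K : Set (Alg L)) (ξ : CondEqn L) : Prop :=
  ∀ A ∈ K, A.Sat ξ

/-- The class of algebras denoted by a flat specification with axioms `Φ`. -/
def FlatMod {L : Signature} (Φ : Set (CondEqn L)) : Set (Alg L) :=
  {A | ∀ ξ ∈ Φ, A.Sat ξ}

/-- Extension of a translation on equations to conditional equations:
`τ⟨Γ, e⟩ = { ⟨⋃_{e₀ ∈ Γ} τ(e₀), e'⟩ : e' ∈ τ(e) }`. -/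
noncomputable def trCE {L L' : Signature} (τ : Eqn L → Finset (Eqn L'))
    (ξ : CondEqn L) : Finset (CondEqn L') :=
  letI := Classical.decEq (Eqn L')
  letI := Classical.decEq (CondEqn L')
  (τ ξ.2).image (fun e' => (ξ.1.biUnion τ, e'))

/-- `τ` interprets the specification (with model class `SP`) in the class `K`. -/
def InterpretsIn {L L' : Signature} (τ : Eqn L → Finset (Eqn L'))
    (SP : Set (Alg L)) (K : Set (Alg L')) : Prop :=
  ∀ ξ : CondEqn L, ClassSat SP ξ ↔ ∀ η ∈ trCE τ ξ, ClassSat K η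

/-- `τ` interprets the specification with model class `SP`. -/
def Interprets {L L' : Signature} (τ : Eqn L → Finset (Eqn L'))
    (SP : Set (Alg L)) : Prop :=
  ∃ K : Set (Alg L'), InterpretsIn τ SP K

/-- A `τ`-model of the specification with model class `SP`. -/
def IsTauModel {L L' : Signature} (τ : Eqn L → Finset (Eqn L'))
    (SP : Set (Alg L)) (A' : Alg L') : Prop :=
  ∀ ξ : CondEqn L, ClassSat SP ξ → ∀ η ∈ trCE τ ξ, A'.Sat η

/-- The class of all `τ`-models of `SP`. -/
def ModTau {L L' : Signature} (τ : Eqn L → Finset (Eqn L'))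
    (SP : Set (Alg L)) : Set (Alg L') :=
  {A' | IsTauModel τ SP A'}

/-- `SP'` refines `SP` by the interpretation `τ`. -/
def Refines {L L' : Signature} (τ : Eqn L → Finset (Eqn L'))
    (SP : Set (Alg L)) (SP' : Set (Alg L')) : Prop :=
  ∀ ξ : CondEqn L, ClassSat SP ξ → ∀ η ∈ trCE τ ξ, ClassSat SP' η

/-- Application of a substitution to an equation. -/
def substEq {L : Signature} (σ : ℕ → L.Term ℕ) (e : Eqn L) : Eqn L :=
  (e.1.subst σ, e.2.subst σ)

/-- The extension of a signature morphism (with variable map `v`) to terms. -/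
def mapTerm {L L' : Signature} (σ : L →ᴸ L') (v : ℕ → ℕ) : L.Term ℕ → L'.Term ℕ
  | .var x => .var (v x)
  | .func f ts => .func (σ.onFunction f) (fun i => mapTerm σ v (ts i))

/-- The extension of a signature morphism to equations. -/
def mapEq {L L' : Signature} (σ : L →ᴸ L') (v : ℕ → ℕ) (e : Eqn L) : Eqn L' :=
  (mapTerm σ v e.1, mapTerm σ v e.2)

/-- The extension of a signature morphism to conditional equations. -/
noncomputable def mapCE {L L' : Signature} (σ : L →ᴸ L') (v : ℕ → ℕ)
    (ξ : CondEqn L) : CondEqn L' :=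
  letI := Classical.decEq (Eqn L')
  (ξ.1.image (mapEq σ v), mapEq σ v ξ.2)

/-- The σ-reduct of an algebra along a signature morphism. -/
def Alg.reduct {L L' : Signature} (σ : L →ᴸ L') (A' : Alg L') : Alg L :=
  { carrier := A'.carrier, str := σ.reduct A'.carrier, nonempty := A'.nonempty }

/-- The composite of two translations on equations: `(ρ∘τ)(e) = ⋃_{e' ∈ τ(e)} ρ(e')`. -/
noncomputable def trCompEq {L L' L'' : Signature} (τ : Eqn L → Finset (Eqn L'))
    (ρ : Eqn L' → Finset (Eqn L'')) (e : Eqn L) : Finset (Eqn L'') :=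
  letI := Classical.decEq (Eqn L'')
  (τ e).biUnion ρ

section Aux
variable {L L' : Signature}

lemma realize_mapTerm (σ : L →ᴸ L') (v : ℕ → ℕ) (A' : Alg L') (h : ℕ → A'.carrier)
    (t : L.Term ℕ) :
    Language.Term.realize h (mapTerm σ v t) =
      (Language.Term.realize (M := (Alg.reduct σ A').carrier) (h ∘ v) t) := by
  induction t with
  | var x => rfl
  | func f ts ih =>
    simp only [mapTerm, Language.Term.realize, ih]
    rfl

lemma satEq_map (σ : L →ᴸ L') (v : ℕ → ℕ) (A' : Alg L') (h : ℕ → A'.carrier) (e : Eqn L) :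
    A'.SatEq h (mapEq σ v e) ↔ (Alg.reduct σ A').SatEq (h ∘ v) e := by
  simp only [Alg.SatEq, mapEq, realize_mapTerm]
  exact Iff.rfl

lemma satEq_of_eq {A B : Alg L} (hAB : A = B) {h : ℕ → A.carrier} {h' : ℕ → B.carrier}
    (hh : HEq h h') (e : Eqn L) : A.SatEq h e ↔ B.SatEq h' e := by
  subst hAB
  exact heq_iff_eq.mp hh ▸ Iff.rfl

/-- Extend the structure of an `L`-algebra along an injective morphism. -/
noncomputable def extendStr (σ : L →ᴸ L') (A : Alg L) : L'.Structure A.carrier where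
  funMap {n} g x :=
    letI := Classical.propDecidable (∃ f : L.Functions n, σ.onFunction f = g)
    if hg : ∃ f : L.Functions n, σ.onFunction f = g then
      Language.Structure.funMap hg.choose x
    else Classical.arbitrary A.carrier
  RelMap _ _ := False

noncomputable def extendAlg (σ : L →ᴸ L') (A : Alg L) : Alg L' :=
  { carrier := A.carrier, str := extendStr σ A, nonempty := A.nonempty }

lemma Alg.ext' {A B : Alg L} (hc : A.carrier = B.carrier) (hs : HEq A.str B.str) : A = B := by
  obtain ⟨Ma, ia, na⟩ := A
  obtain ⟨Mb, ib, nb⟩ := B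
  cases hc
  cases hs
  rfl

lemma reduct_extendAlg (hL : L.IsAlgebraic) (σ : L →ᴸ L')
    (hinj : ∀ n, Function.Injective fun f : L.Functions n => σ.onFunction f)
    (A : Alg L) : Alg.reduct σ (extendAlg σ A) = A := by
  have hstr : (@Language.LHom.reduct L L' σ A.carrier (extendStr σ A)) = A.str := by
    ext1
    · funext n g x
      show (extendStr σ A).funMap (σ.onFunction g) x = _
      have hg : ∃ f : L.Functions n, σ.onFunction f = σ.onFunction g := ⟨g, rfl⟩
      rw [show (extendStr σ A).funMap (σ.onFunction g) x = Language.Structure.funMap hg.choose x from dif_pos hg]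
      have : hg.choose = g := hinj n hg.choose_spec
      rw [this]
    · funext n r
      exact (hL n).elim r
  exact Alg.ext' rfl (heq_of_eq hstr)

end Aux

/-- the translation induced by an injective signature morphism `σ`
interprets `SP`, namely in the class `K = { A' : A'↾σ ∈ ⟦SP⟧ }`. -/
theorem induced_translation_interprets {L L' : Signature}
    (_hL : L.IsAlgebraic) (_hL' : L'.IsAlgebraic)
    (σ : L →ᴸ L') (v : ℕ → ℕ) (hv : Function.Injective v)
    (hinj : ∀ n, Function.Injective fun f : L.Functions n => σ.onFunction f)
    (SP : Set (Alg L)) :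
    Interprets (fun e => ({mapEq σ v e} : Finset (Eqn L'))) SP ∧
      InterpretsIn (fun e => ({mapEq σ v e} : Finset (Eqn L'))) SP
        {A' : Alg L' | Alg.reduct σ A' ∈ SP} := by
  classical
  set τ : Eqn L → Finset (Eqn L') := fun e => ({mapEq σ v e} : Finset (Eqn L'))
  have hred := reduct_extendAlg _hL σ hinj
  have key : InterpretsIn τ SP {A' : Alg L' | Alg.reduct σ A' ∈ SP} := by
    intro ξ
    have htr : ∀ η, η ∈ trCE τ ξ ↔ η = (ξ.1.biUnion τ, mapEq σ v ξ.2) := by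
      intro η
      simp only [trCE, τ, Finset.mem_image, Finset.mem_singleton, exists_eq_left]
      constructor
      · rintro rfl
        exact Prod.ext (Finset.ext fun x => by simp) rfl
      · rintro rfl
        exact Prod.ext (Finset.ext fun x => by simp) rfl
    constructor
    · intro hSP η hη A' hA' h hprem
      rw [htr] at hη
      subst hη
      rw [satEq_map]
      apply hSP _ hA'
      intro e he
      rw [← satEq_map]
      apply hprem
      simp only [Finset.mem_biUnion]
      exact ⟨e, he, by simp [τ]⟩
    · intro hK A hA h hprem
      have hA' : extendAlg σ A ∈ {A' : Alg L' | Alg.reduct σ A' ∈ SP} := by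
        simp only [Set.mem_setOf_eq, hred A]
        exact hA
      have hne : Nonempty ℕ := ⟨0⟩
      set h' : ℕ → A.carrier := h ∘ Function.invFun v with hh'
      have hcomp : ∀ x, h' (v x) = h x := by
        intro x
        simp [hh', Function.leftInverse_invFun hv x]
      have hcomp' : (h' ∘ v) = h := funext hcomp
      have := hK _ ((htr _).mpr rfl) (extendAlg σ A) hA' h' ?_
      · replace this := (satEq_map σ v (extendAlg σ A) h' ξ.2).mp this
        have := (satEq_of_eq (hred A) HEq.rfl ξ.2).mp this
        exact cast (congrArg (fun g => A.SatEq g ξ.2) hcomp') this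
      · intro e' he'
        simp only [Finset.mem_biUnion, τ, Finset.mem_singleton] at he'
        obtain ⟨e, he, rfl⟩ := he'
        refine (satEq_map σ v (extendAlg σ A) h' e).mpr ?_
        refine (satEq_of_eq (hred A) HEq.rfl e).mpr ?_
        exact cast (congrArg (fun g => A.SatEq g e) hcomp').symm (hprem e he)
  exact ⟨⟨_, key⟩, key⟩
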